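/- arXiv:2206.06188 — 2 statements merged into one kernel-verified Lean document; each statement's English description precedes it below -/
import Mathlib

section
/- For every r > 0, the integral over ℝ of t / sinh(2rt) dt equals π²/(8r²). -/
open Real MeasureTheory Set
set_option maxHeartbeats 1000000

lemma odd_sq_hasSum : HasSum (fun n : ℕ => (1:ℝ) / (2*(n:ℝ)+1)^2) (π^2/8) := by
  have hz := hasSum_zeta_two
  have hE : HasSum (fun k : ℕ => (1:ℝ) / ((2*k : ℕ):ℝ)^2) (π^2/24) := by
    have h1 := hz.mul_left (1/4)
    have heq : (fun n : ℕ => (1/4 : ℝ) * (1 / (n:ℝ)^2)) =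
        fun k : ℕ => (1:ℝ) / ((2*k : ℕ):ℝ)^2 := by
      funext k
      push_cast
      rw [mul_pow, one_div_mul_one_div]
      norm_num
    rw [heq, show (1/4 : ℝ) * (π^2/6) = π^2/24 by ring] at h1
    exact h1
  have hOsum : Summable (fun k : ℕ => (1:ℝ) / ((2*k+1 : ℕ):ℝ)^2) :=
    hz.summable.comp_injective (i := fun k : ℕ => 2*k+1) (fun a b hab => by simp only [] at hab; omega)
  obtain ⟨S, hO⟩ := hOsum
  have htot := HasSum.even_add_odd (f := fun n : ℕ => (1:ℝ)/(n:ℝ)^2) hE hO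
  have hS : S = π^2/8 := by
    have : π^2/24 + S = π^2/6 := htot.unique hz
    linarith
  rw [hS] at hO
  have heq2 : (fun k : ℕ => (1:ℝ) / ((2*k+1 : ℕ):ℝ)^2) =
      fun n : ℕ => (1:ℝ) / (2*(n:ℝ)+1)^2 := by
    funext k; push_cast; ring_nf
  rwa [heq2] at hO

lemma core_integral : ∫ u in Ioi (0:ℝ), u / Real.sinh u = π^2/4 := by
  set F : ℕ → ℝ → ℝ := fun n u => 2 * u * Real.exp (-((2*(n:ℝ)+1) * u)) with hF
  have hb : ∀ n : ℕ, (0:ℝ) < 2*(n:ℝ)+1 := fun n => by positivity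
  have hFint : ∀ n : ℕ, IntegrableOn (F n) (Ioi 0) := by
    intro n
    have h := (integrableOn_rpow_mul_exp_neg_mul_rpow (s := 1) (p := 1)
      (b := 2*(n:ℝ)+1) (by norm_num) one_pos (hb n)).const_mul 2
    refine MeasureTheory.IntegrableOn.congr_fun h (fun x hx => ?_) measurableSet_Ioi
    simp only [Real.rpow_one, hF]
    ring_nf
  have hFval : ∀ n : ℕ, ∫ u in Ioi (0:ℝ), F n u = 2 / (2*(n:ℝ)+1)^2 := by
    intro n
    have h := Real.integral_rpow_mul_exp_neg_mul_Ioi (a := 2) (r := 2*(n:ℝ)+1)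
      two_pos (hb n)
    calc ∫ u in Ioi (0:ℝ), F n u
        = 2 * ∫ t in Ioi (0:ℝ), t ^ ((2:ℝ)-1) * Real.exp (-((2*(n:ℝ)+1) * t)) := by
          rw [← integral_const_mul]
          refine setIntegral_congr_fun measurableSet_Ioi (fun x hx => ?_)
          rw [show (2:ℝ)-1 = 1 by norm_num, Real.rpow_one]; simp only [hF]; ring
      _ = 2 * ((1/(2*(n:ℝ)+1)) ^ (2:ℝ) * Real.Gamma 2) := by rw [h]
      _ = 2 / (2*(n:ℝ)+1)^2 := by
          rw [Real.Gamma_two, mul_one,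
            show ((2:ℝ) : ℝ) = ((2:ℕ):ℝ) by norm_num,
            Real.rpow_natCast, div_pow, one_pow]
          ring
  have hsum : ∀ u ∈ Ioi (0:ℝ), HasSum (fun n : ℕ => F n u) (u / Real.sinh u) := by
    intro u hu
    have hu' : (0:ℝ) < u := hu
    have hq1 : Real.exp (-(2*u)) < 1 := Real.exp_lt_one_iff.mpr (by linarith)
    have hgeo := hasSum_geometric_of_lt_one (Real.exp_pos (-(2*u))).le hq1
    have h := hgeo.mul_left (2*u*Real.exp (-u))
    have heq : (fun n : ℕ => (2*u*Real.exp (-u)) * (Real.exp (-(2*u)))^n)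
        = fun n => F n u := by
      funext n
      rw [← Real.exp_nat_mul, mul_assoc, ← Real.exp_add]
      simp only [hF]
      rw [show (-u + (n:ℝ)*-(2*u)) = -((2*(n:ℝ)+1)*u) by ring]
    rw [heq] at h
    have key : Real.sinh u * (2 * Real.exp (-u)) = 1 - Real.exp (-(2*u)) := by
      have e1 : Real.exp u * Real.exp (-u) = 1 := by
        rw [← Real.exp_add]; simp
      have e2 : Real.exp (-u) * Real.exp (-u) = Real.exp (-(2*u)) := by
        rw [← Real.exp_add]; ring_nf
      rw [Real.sinh_eq]
      linear_combination e1 - e2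
    have hs0 : Real.sinh u ≠ 0 := ne_of_gt (Real.sinh_pos_iff.mpr hu')
    have hq0 : 1 - Real.exp (-(2*u)) ≠ 0 := by
      rw [← key]
      exact ne_of_gt (mul_pos (Real.sinh_pos_iff.mpr hu') (by positivity))
    have hval : 2*u*Real.exp (-u) * (1 - Real.exp (-(2*u)))⁻¹ = u / Real.sinh u := by
      rw [← key]
      field_simp
    rwa [hval] at h
  -- norms
  have hnormval : ∀ n : ℕ, ∫ a, ‖F n a‖ ∂(volume.restrict (Ioi 0)) = 2/(2*(n:ℝ)+1)^2 := by
    intro n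
    rw [← hFval n]
    refine setIntegral_congr_fun measurableSet_Ioi (fun x hx => ?_)
    have hx' : (0:ℝ) < x := hx
    simp only [hF]
    rw [Real.norm_eq_abs, abs_of_nonneg (by positivity)]
  have hsummable : Summable (fun n : ℕ => (2:ℝ)/(2*(n:ℝ)+1)^2) := by
    have := odd_sq_hasSum.summable.mul_left 2
    refine this.congr fun n => ?_
    rw [mul_one_div]
  have hswap := integral_tsum_of_summable_integral_norm
    (μ := volume.restrict (Ioi 0)) (F := F) hFint
    (by rw [funext hnormval]; exact hsummable)
  have hL : ∑' n : ℕ, ∫ u in Ioi (0:ℝ), F n u = π^2/4 := by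
    have h2 := odd_sq_hasSum.mul_left 2
    have : HasSum (fun n : ℕ => (2:ℝ)/(2*(n:ℝ)+1)^2) (π^2/4) := by
      rw [show π^2/4 = 2 * (π^2/8) by ring]
      refine h2.congr_fun fun n => by rw [mul_one_div]
    rw [funext hFval]
    exact this.tsum_eq
  have hR : ∫ u in Ioi (0:ℝ), ∑' n : ℕ, F n u = ∫ u in Ioi (0:ℝ), u / Real.sinh u := by
    refine setIntegral_congr_fun measurableSet_Ioi (fun u hu => ?_)
    exact (hsum u hu).tsum_eq
  rw [← hR, ← hswap, hL]

theorem integral_div_sinh (r : ℝ) (hr : 0 < r) :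
    ∫ t : ℝ, (if t = 0 then 1 / (2 * r) else t / Real.sinh (2 * r * t))
      = Real.pi ^ 2 / (8 * r ^ 2) := by
  have h2r : (2*r) ≠ 0 := by positivity
  have h0 : (fun t : ℝ => if t = 0 then 1/(2*r) else t / Real.sinh (2*r*t))
      =ᵐ[volume] (fun t : ℝ => t / Real.sinh (2*r*t)) := by
    have hne : ∀ᵐ t : ℝ, t ≠ 0 := by
      rw [ae_iff]
      simp only [not_not, setOf_eq_eq_singleton]
      exact measure_singleton 0
    filter_upwards [hne] with t ht
    rw [if_neg ht]
  rw [integral_congr_ae h0]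
  have heven : (fun t : ℝ => t / Real.sinh (2*r*t))
      = fun t => (fun x => x / Real.sinh (2*r*x)) |t| := by
    funext t
    rcases le_or_gt 0 t with h | h
    · rw [abs_of_nonneg h]
    · rw [abs_of_neg h]
      show t / Real.sinh (2*r*t) = -t / Real.sinh (2*r*-t)
      rw [mul_neg, Real.sinh_neg, neg_div_neg_eq]
  rw [heven, integral_comp_abs (f := fun x => x / Real.sinh (2*r*x))]
  have hinner : ∫ x in Ioi (0:ℝ), x / Real.sinh (2*r*x)
      = (2*r)⁻¹ * ((2*r)⁻¹ * (π^2/4)) := by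
    have hfun : (fun x : ℝ => x / Real.sinh (2*r*x))
        = fun x => (2*r)⁻¹ * ((fun u => u / Real.sinh u) (2*r*x)) := by
      funext x
      simp only []
      rw [← mul_div_assoc, inv_mul_cancel_left₀ h2r]
    rw [hfun, integral_const_mul,
      integral_comp_mul_left_Ioi (fun u => u / Real.sinh u) 0 (by positivity : (0:ℝ) < 2*r)]
    rw [mul_zero, core_integral, smul_eq_mul]
  rw [hinner]
  field_simp
  ring
end

section
/- Let K ⊂ ℝⁿ be a convex body with B(a,r) ⊂ K ⊂ B(0,2nr) and K° ⊂ B(0, 2n/r). Define K_ℂ := {z = x + iy ∈ ℂⁿ : ⟨x,t⟩² + ⟨y,t⟩² ≤ 1 for all t ∈ K°}. Then (1/(4√2 n²))(K × K) ⊂ K_ℂ ⊂ K × K, where K × K is identified with the set of z = x + iy with x,y ∈ K. -/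
open MeasureTheory Pointwise
open scoped InnerProductSpace

lemma aux_mem_of_polar (n : ℕ) (K : Set (EuclideanSpace ℝ (Fin n)))
    (hKcomp : IsCompact K) (hKconv : Convex ℝ K) (hne : K.Nonempty) (R : ℝ)
    (h3 : {t : EuclideanSpace ℝ (Fin n) | ∀ z ∈ K, ⟪z, t⟫_ℝ ≤ 1} ⊆ Metric.closedBall 0 R)
    (x : EuclideanSpace ℝ (Fin n))
    (hx : ∀ t ∈ {t : EuclideanSpace ℝ (Fin n) | ∀ z ∈ K, ⟪z, t⟫_ℝ ≤ 1}, ⟪x, t⟫_ℝ ≤ 1) :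
    x ∈ K := by
  by_contra hxK
  obtain ⟨f, u, hfu, hux⟩ := geometric_hahn_banach_closed_point hKconv hKcomp.isClosed hxK
  set v := (InnerProductSpace.toDual ℝ (EuclideanSpace ℝ (Fin n))).symm f with hv
  have hvz : ∀ z, ⟪z, v⟫_ℝ = f z := fun z => by
    rw [real_inner_comm]; exact InnerProductSpace.toDual_symm_apply
  rcases le_or_gt u 0 with hu | hu
  · obtain ⟨z0, hz0⟩ := hne
    have hfz0 : f z0 < 0 := lt_of_lt_of_le (hfu z0 hz0) hu
    have hvne : v ≠ 0 := by
      intro h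
      rw [← hvz z0, h, inner_zero_right] at hfz0
      exact lt_irrefl 0 hfz0
    have hvpos : 0 < ‖v‖ := norm_pos_iff.mpr hvne
    have hR : 0 ≤ R := by
      have : (0 : EuclideanSpace ℝ (Fin n)) ∈ Metric.closedBall 0 R := by
        apply h3; intro z hz; simp
      rwa [Metric.mem_closedBall, dist_self] at this
    set lam := (R + 1) / ‖v‖ with hlam
    have hlampos : 0 < lam := div_pos (by linarith) hvpos
    have hmem : lam • v ∈ {t : EuclideanSpace ℝ (Fin n) | ∀ z ∈ K, ⟪z, t⟫_ℝ ≤ 1} := by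
      intro z hz
      rw [real_inner_smul_right, hvz]
      have : f z < 0 := lt_of_lt_of_le (hfu z hz) hu
      nlinarith
    have := h3 hmem
    rw [Metric.mem_closedBall, dist_zero_right, norm_smul] at this
    rw [Real.norm_eq_abs, abs_of_pos hlampos] at this
    have : R + 1 ≤ R := by
      have h' : lam * ‖v‖ = R + 1 := by rw [hlam]; field_simp
      linarith [h' ▸ this]
    linarith
  · have hmem : u⁻¹ • v ∈ {t : EuclideanSpace ℝ (Fin n) | ∀ z ∈ K, ⟪z, t⟫_ℝ ≤ 1} := by
      intro z hz
      rw [real_inner_smul_right, hvz]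
      have := hfu z hz
      rw [inv_mul_le_iff₀ hu]
      linarith
    have h1 := hx _ hmem
    rw [real_inner_smul_right, hvz] at h1
    rw [inv_mul_le_iff₀ hu] at h1
    linarith

theorem KC_between_products (n : ℕ) (K : Set (EuclideanSpace ℝ (Fin n)))
    (hKcomp : IsCompact K) (hKconv : Convex ℝ K) (hKint : (interior K).Nonempty)
    (a : EuclideanSpace ℝ (Fin n)) (r : ℝ) (hr : 0 < r)
    (h1 : Metric.closedBall a r ⊆ K) (h2 : K ⊆ Metric.closedBall 0 (2 * n * r))
    (h3 : {t : EuclideanSpace ℝ (Fin n) | ∀ x ∈ K, ⟪x, t⟫_ℝ ≤ 1}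
      ⊆ Metric.closedBall 0 (2 * n / r)) :
    (1 / (4 * Real.sqrt 2 * n ^ 2)) • (K ×ˢ K) ⊆
        {p : EuclideanSpace ℝ (Fin n) × EuclideanSpace ℝ (Fin n) |
          ∀ t ∈ {t : EuclideanSpace ℝ (Fin n) | ∀ x ∈ K, ⟪x, t⟫_ℝ ≤ 1},
            ⟪p.1, t⟫_ℝ ^ 2 + ⟪p.2, t⟫_ℝ ^ 2 ≤ 1} ∧
      {p : EuclideanSpace ℝ (Fin n) × EuclideanSpace ℝ (Fin n) |
          ∀ t ∈ {t : EuclideanSpace ℝ (Fin n) | ∀ x ∈ K, ⟪x, t⟫_ℝ ≤ 1},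
            ⟪p.1, t⟫_ℝ ^ 2 + ⟪p.2, t⟫_ℝ ^ 2 ≤ 1} ⊆ K ×ˢ K := by
  have hne : K.Nonempty := hKint.mono interior_subset |>.mono (by rfl)
  constructor
  · -- first inclusion
    rintro p hp t ht
    obtain ⟨q, hq, rfl⟩ := Set.mem_smul_set.mp hp
    obtain ⟨hq1, hq2⟩ := Set.mem_prod.mp hq
    rcases Nat.eq_zero_or_pos n with hn | hn
    · subst hn
      have e1 : ((1 / (4 * Real.sqrt 2 * (0:ℕ) ^ 2) : ℝ) • q).1
          = (0 : EuclideanSpace ℝ (Fin 0)) := Subsingleton.elim _ _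
      have e2 : ((1 / (4 * Real.sqrt 2 * (0:ℕ) ^ 2) : ℝ) • q).2
          = (0 : EuclideanSpace ℝ (Fin 0)) := Subsingleton.elim _ _
      simp only [Set.mem_setOf_eq, e1, e2, inner_zero_left]
      norm_num
    · set c : ℝ := 1 / (4 * Real.sqrt 2 * n ^ 2) with hc
      have hsq2 : (0:ℝ) < Real.sqrt 2 := Real.sqrt_pos.mpr (by norm_num)
      have hsq2sq : Real.sqrt 2 ^ 2 = 2 := Real.sq_sqrt (by norm_num)
      have hnpos : (0:ℝ) < (n:ℝ) := by exact_mod_cast hn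
      have ht' : ‖t‖ ≤ 2 * n / r := by
        have := h3 ht
        rwa [Metric.mem_closedBall, dist_zero_right] at this
      have hb : ∀ z ∈ K, |⟪z, t⟫_ℝ| ≤ 4 * (n:ℝ)^2 := by
        intro z hz
        have hz' : ‖z‖ ≤ 2 * n * r := by
          have := h2 hz
          rwa [Metric.mem_closedBall, dist_zero_right] at this
        have habs := abs_real_inner_le_norm z t
        have hmul : ‖z‖ * ‖t‖ ≤ (2 * n * r) * (2 * n / r) :=
          mul_le_mul hz' ht' (norm_nonneg t) (by positivity)
        have heq : (2 * (n:ℝ) * r) * (2 * n / r) = 4 * n^2 := by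
          field_simp; ring
        linarith [heq ▸ hmul]
      have hb1 := hb q.1 hq1
      have hb2 := hb q.2 hq2
      have hs1 : ⟪q.1, t⟫_ℝ ^ 2 ≤ (4 * (n:ℝ)^2)^2 := by
        rw [← sq_abs]; exact pow_le_pow_left₀ (abs_nonneg _) hb1 2
      have hs2 : ⟪q.2, t⟫_ℝ ^ 2 ≤ (4 * (n:ℝ)^2)^2 := by
        rw [← sq_abs]; exact pow_le_pow_left₀ (abs_nonneg _) hb2 2
      have e1 : (c • q).1 = c • q.1 := rfl
      have e2 : (c • q).2 = c • q.2 := rfl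
      simp only [Set.mem_setOf_eq, e1, e2, real_inner_smul_left]
      have hc2 : c^2 = 1 / (32 * (n:ℝ)^4) := by
        rw [hc]; rw [div_pow, mul_pow, mul_pow, hsq2sq]; ring_nf
      have key : (c * ⟪q.1, t⟫_ℝ)^2 + (c * ⟪q.2, t⟫_ℝ)^2 ≤ 1 := by
        have h1' : (c * ⟪q.1, t⟫_ℝ)^2 = c^2 * ⟪q.1, t⟫_ℝ^2 := by ring
        have h2' : (c * ⟪q.2, t⟫_ℝ)^2 = c^2 * ⟪q.2, t⟫_ℝ^2 := by ring
        rw [h1', h2', hc2]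
        rw [div_mul_eq_mul_div, div_mul_eq_mul_div, one_mul, one_mul,
          ← add_div, div_le_one (by positivity)]
        nlinarith [hs1, hs2]
      exact key
  · rintro p hp
    refine Set.mem_prod.mpr ⟨?_, ?_⟩
    · refine aux_mem_of_polar n K hKcomp hKconv hne _ h3 p.1 ?_
      intro t ht
      have := hp t ht
      have h4 : ⟪p.1, t⟫_ℝ ^ 2 ≤ 1 := by nlinarith [sq_nonneg (⟪p.2, t⟫_ℝ)]
      nlinarith [sq_nonneg (⟪p.1, t⟫_ℝ - 1)]
    · refine aux_mem_of_polar n K hKcomp hKconv hne _ h3 p.2 ?_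
      intro t ht
      have := hp t ht
      have h4 : ⟪p.2, t⟫_ℝ ^ 2 ≤ 1 := by nlinarith [sq_nonneg (⟪p.1, t⟫_ℝ)]
      nlinarith [sq_nonneg (⟪p.2, t⟫_ℝ - 1)]
end
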